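/- Let T₁ be the standard Young tableau of shape (3,2) with first row {1,2,3} and second row {4,5}, and let S be the single-row standard tableau with entries 1,2,3 (so Y_S = (1/3!)·∑_{σ ∈ S₃} σ is the full symmetrizer on {1,2,3}). Then in ℂ[S₅] the Hermitian Young operator of T₁ satisfies Θ_{T₁} = ι₃(Y_S) · Y_{T₁} · ι₃(Y_S), where ι₃: ℂ[S₃] → ℂ[S₅] is the algebra embedding induced by the inclusion S₃ ↪ S₅ fixing 4 and 5; i.e., in this case sandwiching with ι(Θ_{T₁'}) in the recursive definition may be replaced by sandwiching with the symmetrizer over the first row. -/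

import Mathlib

open scoped Classical

/-- A standard Young tableau with `n` boxes: the boxes of a Young diagram are filled
bijectively with the numbers `1, …, n`, increasing along each row and down each column.
The entry function is `0` outside the diagram, making the representation canonical. -/
structure SYT (n : ℕ) where
  shape : YoungDiagram
  entry : ℕ × ℕ → ℕ
  zero_outside : ∀ c : ℕ × ℕ, c ∉ shape.cells → entry c = 0
  bijOn : Set.BijOn entry (shape.cells : Set (ℕ × ℕ)) (Set.Icc 1 n)
  row_lt : ∀ i j₁ j₂ : ℕ, j₁ < j₂ → (i, j₂) ∈ shape.cells → entry (i, j₁) < entry (i, j₂)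
  col_lt : ∀ i₁ i₂ j : ℕ, i₁ < i₂ → (i₂, j) ∈ shape.cells → entry (i₁, j) < entry (i₂, j)

namespace SYT

/-- The row index of the box of `T` containing the number `x + 1`. -/
def rowOf {n : ℕ} (T : SYT n) (x : Fin n) : ℕ :=
  (T.shape.cells.filter fun c => T.entry c = (x : ℕ) + 1).sup Prod.fst

/-- The column index of the box of `T` containing the number `x + 1`. -/
def colOf {n : ℕ} (T : SYT n) (x : Fin n) : ℕ :=
  (T.shape.cells.filter fun c => T.entry c = (x : ℕ) + 1).sup Prod.snd

/-- A permutation is horizontal for `T` (i.e. belongs to the row group `R(T)`)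
if it preserves the set of numbers in each row of `T`. -/
def IsHorizontal {n : ℕ} (T : SYT n) (σ : Equiv.Perm (Fin n)) : Prop :=
  ∀ x, T.rowOf (σ x) = T.rowOf x

/-- A permutation is vertical for `T` (i.e. belongs to the column group `C(T)`)
if it preserves the set of numbers in each column of `T`. -/
def IsVertical {n : ℕ} (T : SYT n) (σ : Equiv.Perm (Fin n)) : Prop :=
  ∀ x, T.colOf (σ x) = T.colOf x

/-- The row symmetrizer `s_T = ∑_{h ∈ R(T)} h` in `ℂ[S_n]`. -/
noncomputable def rowSym {n : ℕ} (T : SYT n) : MonoidAlgebra ℂ (Equiv.Perm (Fin n)) :=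
  ∑ σ ∈ Finset.univ.filter (fun σ => T.IsHorizontal σ),
    MonoidAlgebra.of ℂ (Equiv.Perm (Fin n)) σ

/-- The column antisymmetrizer `a_T = ∑_{v ∈ C(T)} sgn(v)·v` in `ℂ[S_n]`. -/
noncomputable def colAntisym {n : ℕ} (T : SYT n) : MonoidAlgebra ℂ (Equiv.Perm (Fin n)) :=
  ∑ σ ∈ Finset.univ.filter (fun σ => T.IsVertical σ),
    ((Equiv.Perm.sign σ : ℤ) : ℂ) • MonoidAlgebra.of ℂ (Equiv.Perm (Fin n)) σ

end SYT

/-- The hook length of the box `c` of the Young diagram `μ`: the number of boxes to its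
right in its row, plus the number of boxes below it in its column, plus one. -/
def hookLength (μ : YoungDiagram) (c : ℕ × ℕ) : ℕ :=
  (μ.rowLen c.1 - (c.2 + 1)) + (μ.colLen c.2 - (c.1 + 1)) + 1

/-- `H(T)`: the product of the hook lengths of the boxes of the Young diagram `μ`. -/
def hookProd (μ : YoungDiagram) : ℕ :=
  ∏ c ∈ μ.cells, hookLength μ c

/-- The Young operator `Y_T = (1/H(T)) · s_T · a_T ∈ ℂ[S_n]`. -/
noncomputable def youngOp {n : ℕ} (T : SYT n) : MonoidAlgebra ℂ (Equiv.Perm (Fin n)) :=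
  ((hookProd T.shape : ℂ))⁻¹ • (T.rowSym * T.colAntisym)

/-- `f_T(N) = ∏_{(j,k)} (N + k − j)`, the product running over the boxes of the Young
diagram `μ` in row `j` and column `k` (here boxes `c = (c.1, c.2)` are 0-indexed,
with `c.1` the row and `c.2` the column, so the content `k - j` is `c.2 - c.1`). -/
noncomputable def fPoly (μ : YoungDiagram) (N : ℕ) : ℂ :=
  ∏ c ∈ μ.cells, ((N : ℂ) + (c.2 : ℂ) - (c.1 : ℂ))

namespace SYT

/-- The box of `T ∈ SYT_n` containing the largest entry `n`. -/
def maxCell {n : ℕ} (T : SYT n) : ℕ × ℕ :=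
  (T.shape.cells.filter fun c => T.entry c = n).sup id

lemma filter_maxCell {n : ℕ} (T : SYT (n + 1)) :
    ∃ c, (T.shape.cells.filter fun d => T.entry d = n + 1) = {c} := by
  obtain ⟨c, hc, hce⟩ :=
    T.bijOn.surjOn (show (n + 1 : ℕ) ∈ Set.Icc 1 (n + 1) by simp)
  refine ⟨c, ?_⟩
  ext d
  simp only [Finset.mem_filter, Finset.mem_singleton]
  constructor
  · rintro ⟨hd, hde⟩
    exact T.bijOn.injOn (Finset.mem_coe.mpr hd) hc (by rw [hde, hce])
  · rintro rfl
    exact ⟨Finset.mem_coe.mp hc, hce⟩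

lemma maxCell_spec {n : ℕ} (T : SYT (n + 1)) :
    T.maxCell ∈ T.shape.cells ∧ T.entry T.maxCell = n + 1 := by
  obtain ⟨c, hfc⟩ := filter_maxCell T
  have hc : c ∈ T.shape.cells.filter fun d => T.entry d = n + 1 := by
    rw [hfc]; exact Finset.mem_singleton_self c
  rw [Finset.mem_filter] at hc
  have hmc : T.maxCell = c := by
    unfold maxCell
    rw [hfc, Finset.sup_singleton]
    rfl
  rw [hmc]
  exact hc

/-- Entries of a standard Young tableau increase strictly in the partial order on boxes. -/
lemma entry_strict_mono {n : ℕ} (T : SYT n) {c d : ℕ × ℕ} (hd : d ∈ T.shape.cells)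
    (hle : c ≤ d) (hne : c ≠ d) : T.entry c < T.entry d := by
  obtain ⟨a, b⟩ := c; obtain ⟨x, y⟩ := d
  rw [Prod.mk_le_mk] at hle
  obtain ⟨hax, hby⟩ := hle
  rcases Nat.lt_or_ge a x with h | h
  · have hxb : (x, b) ∈ T.shape.cells :=
      T.shape.isLowerSet (by rw [Prod.mk_le_mk]; exact ⟨le_refl x, hby⟩) hd
    have h1 : T.entry (a, b) < T.entry (x, b) := T.col_lt a x b h hxb
    rcases Nat.lt_or_ge b y with h2 | h2
    · exact h1.trans (T.row_lt x b y h2 hd)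
    · have : b = y := le_antisymm hby h2
      subst this; exact h1
  · have hax' : a = x := le_antisymm hax h
    subst hax'
    rcases Nat.lt_or_ge b y with h2 | h2
    · exact T.row_lt a b y h2 hd
    · have : b = y := le_antisymm hby h2
      subst this
      exact absurd rfl hne

lemma isLowerSet_erase_maxCell {n : ℕ} (T : SYT (n + 1)) :
    IsLowerSet ((T.shape.cells.erase T.maxCell : Finset (ℕ × ℕ)) : Set (ℕ × ℕ)) := by
  intro a b hba ha
  simp only [Finset.coe_erase, Set.mem_diff, Finset.mem_coe, Set.mem_singleton_iff] at ha ⊢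
  obtain ⟨hac, hane⟩ := ha
  refine ⟨T.shape.isLowerSet hba hac, ?_⟩
  rintro rfl
  have hlt := entry_strict_mono T hac hba (Ne.symm hane)
  have h1 := (maxCell_spec T).2
  have h2 := T.bijOn.mapsTo (Finset.mem_coe.mpr hac)
  simp only [Set.mem_Icc] at h2
  omega

/-- `T' ∈ SYT_n`: the standard Young tableau obtained from `T ∈ SYT_{n+1}` by deleting
the box containing the highest number `n + 1`. -/
def restrict {n : ℕ} (T : SYT (n + 1)) : SYT n where
  shape := ⟨T.shape.cells.erase T.maxCell, isLowerSet_erase_maxCell T⟩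
  entry := fun c => if c = T.maxCell then 0 else T.entry c
  zero_outside := by
    intro c hc
    have hc' : c ∉ T.shape.cells.erase T.maxCell := hc
    rcases eq_or_ne c T.maxCell with h | h
    · simp [h]
    · have hnc : c ∉ T.shape.cells := fun hmem => hc' (Finset.mem_erase.mpr ⟨h, hmem⟩)
      simp [if_neg h, T.zero_outside c hnc]
  bijOn := by
    refine ⟨?_, ?_, ?_⟩
    · intro c hc
      have hc' : c ∈ T.shape.cells.erase T.maxCell := hc
      rw [Finset.mem_erase] at hc'
      obtain ⟨hne, hmem⟩ := hc'
      have h1 := T.bijOn.mapsTo (Finset.mem_coe.mpr hmem)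
      simp only [Set.mem_Icc] at h1
      have h2 : T.entry c ≠ n + 1 := by
        intro h
        exact hne (T.bijOn.injOn (Finset.mem_coe.mpr hmem)
          (Finset.mem_coe.mpr (maxCell_spec T).1) (by rw [h, (maxCell_spec T).2]))
      simp only [if_neg hne, Set.mem_Icc]
      omega
    · intro a ha b hb h
      have ha' : a ∈ T.shape.cells.erase T.maxCell := ha
      have hb' : b ∈ T.shape.cells.erase T.maxCell := hb
      rw [Finset.mem_erase] at ha' hb'
      simp only [if_neg ha'.1, if_neg hb'.1] at h
      exact T.bijOn.injOn (Finset.mem_coe.mpr ha'.2) (Finset.mem_coe.mpr hb'.2) h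
    · intro m hm
      simp only [Set.mem_Icc] at hm
      obtain ⟨c, hc, hce⟩ := T.bijOn.surjOn
        (show m ∈ Set.Icc 1 (n + 1) by simp only [Set.mem_Icc]; omega)
      have hne : c ≠ T.maxCell := by
        intro h
        rw [h, (maxCell_spec T).2] at hce
        omega
      refine ⟨c, ?_, ?_⟩
      · exact Finset.mem_coe.mpr (Finset.mem_erase.mpr ⟨hne, Finset.mem_coe.mp hc⟩)
      · simp only [if_neg hne]
        exact hce
  row_lt := by
    intro i j₁ j₂ hj hmem
    have hmem' : (i, j₂) ∈ T.shape.cells.erase T.maxCell := hmem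
    rw [Finset.mem_erase] at hmem'
    obtain ⟨hne₂, hmem₂⟩ := hmem'
    have h1 := T.bijOn.mapsTo (Finset.mem_coe.mpr hmem₂)
    simp only [Set.mem_Icc] at h1
    rcases eq_or_ne (i, j₁) T.maxCell with h | h
    · simp only [if_pos h, if_neg hne₂]
      omega
    · simp only [if_neg h, if_neg hne₂]
      exact T.row_lt i j₁ j₂ hj hmem₂
  col_lt := by
    intro i₁ i₂ j hi hmem
    have hmem' : (i₂, j) ∈ T.shape.cells.erase T.maxCell := hmem
    rw [Finset.mem_erase] at hmem'
    obtain ⟨hne₂, hmem₂⟩ := hmem'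
    have h1 := T.bijOn.mapsTo (Finset.mem_coe.mpr hmem₂)
    simp only [Set.mem_Icc] at h1
    rcases eq_or_ne (i₁, j) T.maxCell with h | h
    · simp only [if_pos h, if_neg hne₂]
      omega
    · simp only [if_neg h, if_neg hne₂]
      exact T.col_lt i₁ i₂ j hi hmem₂

end SYT

/-- The algebra embedding `ℂ[S_m] → ℂ[S_n]` (for `m ≤ n`) induced by the inclusion
`S_m ↪ S_n` acting on the first `m` letters and fixing the remaining ones. -/
noncomputable def iotaLE (m n : ℕ) (h : m ≤ n) :
    MonoidAlgebra ℂ (Equiv.Perm (Fin m)) →ₐ[ℂ] MonoidAlgebra ℂ (Equiv.Perm (Fin n)) :=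
  MonoidAlgebra.mapDomainAlgHom ℂ ℂ (Equiv.Perm.viaEmbeddingHom (Fin.castLEEmb h))

/-- The algebra embedding `ι : ℂ[S_n] → ℂ[S_{n+1}]` induced by the inclusion
`S_n ↪ S_{n+1}` fixing the last letter `n + 1`. -/
noncomputable def iota (n : ℕ) :
    MonoidAlgebra ℂ (Equiv.Perm (Fin n)) →ₐ[ℂ] MonoidAlgebra ℂ (Equiv.Perm (Fin (n + 1))) :=
  iotaLE n (n + 1) (Nat.le_succ n)

/-- The Hermitian Young operator `Θ_T ∈ ℂ[S_n]`, defined recursively by `Θ_T = Y_T` for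
`n ≤ 2` and `Θ_T = ι(Θ_{T'}) · Y_T · ι(Θ_{T'})` for `n ≥ 3`, where `T' ∈ SYT_{n-1}` is
obtained from `T` by deleting the box containing `n`. -/
noncomputable def theta : (n : ℕ) → SYT n → MonoidAlgebra ℂ (Equiv.Perm (Fin n))
  | 0, T => youngOp T
  | 1, T => youngOp T
  | 2, T => youngOp T
  | (n + 3), T =>
      iota (n + 2) (theta (n + 2) T.restrict) * youngOp T *
        iota (n + 2) (theta (n + 2) T.restrict)

/-- The Young diagram of shape `(3,2)`: rows of lengths 3 and 2 (cells are 0-indexed,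
`(i, j)` meaning row `i`, column `j`). -/
def shape32 : YoungDiagram :=
  ⟨{(0, 0), (0, 1), (0, 2), (1, 0), (1, 1)}, by
    rintro ⟨a, b⟩ ⟨c, d⟩ hle hmem
    rw [Prod.mk_le_mk] at hle
    simp only [Finset.coe_insert, Set.mem_insert_iff, Finset.coe_singleton,
      Set.mem_singleton_iff, Prod.mk.injEq] at hmem ⊢
    omega⟩

lemma mem_shape32 (c : ℕ × ℕ) : c ∈ shape32.cells ↔ c.1 ≤ 1 ∧ c.1 + c.2 ≤ 2 := by
  rcases c with ⟨a, b⟩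
  simp only [shape32, Finset.mem_insert, Finset.mem_singleton, Prod.mk.injEq]
  omega

/-- Entry function of `T₁`: `1 2 3` in the first row, `4 5` in the second row. -/
def entryT₁ (c : ℕ × ℕ) : ℕ :=
  if c.1 ≤ 1 ∧ c.1 + c.2 ≤ 2 then 3 * c.1 + c.2 + 1 else 0

/-- Entry function of `T₂`: `1 3 5` in the first row, `2 4` in the second row. -/
def entryT₂ (c : ℕ × ℕ) : ℕ :=
  if c.1 ≤ 1 ∧ c.1 + c.2 ≤ 2 then 2 * c.2 + c.1 + 1 else 0

/-- The standard Young tableau of shape `(3,2)` with first row `{1,2,3}` and second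
row `{4,5}`. -/
def T₁ : SYT 5 where
  shape := shape32
  entry := entryT₁
  zero_outside := by
    intro c hc
    rw [mem_shape32] at hc
    simp only [entryT₁, if_neg hc]
  bijOn := by
    refine ⟨?_, ?_, ?_⟩
    · intro c hc
      simp only [Finset.mem_coe, mem_shape32] at hc
      simp only [entryT₁, if_pos hc, Set.mem_Icc]
      omega
    · rintro ⟨a₁, a₂⟩ ha ⟨b₁, b₂⟩ hb h
      simp only [Finset.mem_coe, mem_shape32] at ha hb
      simp only [entryT₁] at h
      split_ifs at h
      simp only [Prod.mk.injEq]
      omega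
    · intro m hm
      simp only [Set.mem_Icc] at hm
      refine ⟨((m - 1) / 3, (m - 1) % 3), ?_, ?_⟩
      · simp only [Finset.mem_coe, mem_shape32]; omega
      · simp only [entryT₁]; split_ifs <;> omega
  row_lt := by
    intro i j₁ j₂ hj hmem
    rw [mem_shape32] at hmem
    simp only [entryT₁]
    split_ifs <;> omega
  col_lt := by
    intro i₁ i₂ j hi hmem
    rw [mem_shape32] at hmem
    simp only [entryT₁]
    split_ifs <;> omega

/-- The standard Young tableau of shape `(3,2)` with first row `{1,3,5}` and second
row `{2,4}`. -/
def T₂ : SYT 5 where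
  shape := shape32
  entry := entryT₂
  zero_outside := by
    intro c hc
    rw [mem_shape32] at hc
    simp only [entryT₂, if_neg hc]
  bijOn := by
    refine ⟨?_, ?_, ?_⟩
    · intro c hc
      simp only [Finset.mem_coe, mem_shape32] at hc
      simp only [entryT₂, if_pos hc, Set.mem_Icc]
      omega
    · rintro ⟨a₁, a₂⟩ ha ⟨b₁, b₂⟩ hb h
      simp only [Finset.mem_coe, mem_shape32] at ha hb
      simp only [entryT₂] at h
      split_ifs at h
      simp only [Prod.mk.injEq]
      omega
    · intro m hm
      simp only [Set.mem_Icc] at hm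
      refine ⟨((m - 1) % 2, (m - 1) / 2), ?_, ?_⟩
      · simp only [Finset.mem_coe, mem_shape32]; omega
      · simp only [entryT₂]; split_ifs <;> omega
  row_lt := by
    intro i j₁ j₂ hj hmem
    rw [mem_shape32] at hmem
    simp only [entryT₂]
    split_ifs <;> omega
  col_lt := by
    intro i₁ i₂ j hi hmem
    rw [mem_shape32] at hmem
    simp only [entryT₂]
    split_ifs <;> omega

/-- The single-row Young diagram with 3 boxes. -/
def shapeRow3 : YoungDiagram :=
  ⟨{(0, 0), (0, 1), (0, 2)}, by
    rintro ⟨a, b⟩ ⟨c, d⟩ hle hmem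
    rw [Prod.mk_le_mk] at hle
    simp only [Finset.coe_insert, Set.mem_insert_iff, Finset.coe_singleton,
      Set.mem_singleton_iff, Prod.mk.injEq] at hmem ⊢
    omega⟩

lemma mem_shapeRow3 (c : ℕ × ℕ) : c ∈ shapeRow3.cells ↔ c.1 = 0 ∧ c.2 ≤ 2 := by
  rcases c with ⟨a, b⟩
  simp only [shapeRow3, Finset.mem_insert, Finset.mem_singleton, Prod.mk.injEq]
  omega

/-- The single-row standard Young tableau with entries `1, 2, 3`. -/
def rowTab3 : SYT 3 where
  shape := shapeRow3
  entry := fun c => if c.1 = 0 ∧ c.2 ≤ 2 then c.2 + 1 else 0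
  zero_outside := by
    intro c hc
    rw [mem_shapeRow3] at hc
    simp only [if_neg hc]
  bijOn := by
    refine ⟨?_, ?_, ?_⟩
    · intro c hc
      simp only [Finset.mem_coe, mem_shapeRow3] at hc
      simp only [if_pos hc, Set.mem_Icc]
      omega
    · rintro ⟨a₁, a₂⟩ ha ⟨b₁, b₂⟩ hb h
      simp only [Finset.mem_coe, mem_shapeRow3] at ha hb
      simp only at h
      split_ifs at h
      simp only [Prod.mk.injEq]
      omega
    · intro m hm
      simp only [Set.mem_Icc] at hm
      refine ⟨(0, m - 1), ?_, ?_⟩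
      · simp only [Finset.mem_coe, mem_shapeRow3, true_and]
        omega
      · simp only [true_and]
        split_ifs <;> omega
  row_lt := by
    intro i j₁ j₂ hj hmem
    rw [mem_shapeRow3] at hmem
    simp only
    split_ifs <;> omega
  col_lt := by
    intro i₁ i₂ j hi hmem
    rw [mem_shapeRow3] at hmem
    simp only
    split_ifs <;> omega

open Equiv Equiv.Perm Finset

set_option maxRecDepth 100000

open Equiv Equiv.Perm Finset

set_option maxRecDepth 100000

section Generic
variable {Γ : Type*} [Group Γ]

lemma sum_of_mul (H : Finset Γ) (g : Γ) (hc : ∀ x, x ∈ H ↔ x * g ∈ H) :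
    (∑ x ∈ H, MonoidAlgebra.of ℂ Γ x) * MonoidAlgebra.of ℂ Γ g = ∑ x ∈ H, MonoidAlgebra.of ℂ Γ x := by
  rw [Finset.sum_mul]
  simp_rw [← map_mul]
  exact Finset.sum_equiv (Equiv.mulRight g) (fun x => hc x) (fun i _ => rfl)

lemma of_mul_sum (H : Finset Γ) (g : Γ) (hc : ∀ x, x ∈ H ↔ g * x ∈ H) :
    MonoidAlgebra.of ℂ Γ g * (∑ x ∈ H, MonoidAlgebra.of ℂ Γ x) = ∑ x ∈ H, MonoidAlgebra.of ℂ Γ x := by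
  rw [Finset.mul_sum]
  simp_rw [← map_mul]
  exact Finset.sum_equiv (Equiv.mulLeft g) (fun x => hc x) (fun i _ => rfl)
end Generic

namespace SYT
variable {n : ℕ} {T : SYT n}

lemma IsHorizontal.mul {σ τ : Perm (Fin n)} (hσ : T.IsHorizontal σ) (hτ : T.IsHorizontal τ) :
    T.IsHorizontal (σ * τ) := fun x => by
  rw [Perm.mul_apply, hσ, hτ]

lemma IsHorizontal.inv {σ : Perm (Fin n)} (hσ : T.IsHorizontal σ) :
    T.IsHorizontal σ⁻¹ := fun x => by
  conv_rhs => rw [← (show σ (σ⁻¹ x) = x from Equiv.apply_symm_apply σ x)]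
  rw [hσ]

lemma of_mul_rowSym {σ : Perm (Fin n)} (hσ : T.IsHorizontal σ) :
    MonoidAlgebra.of ℂ (Perm (Fin n)) σ * T.rowSym = T.rowSym := by
  refine of_mul_sum _ _ (fun x => ?_)
  simp only [Finset.mem_filter, Finset.mem_univ, true_and]
  exact ⟨fun hx => hσ.mul hx, fun hx => by
    have := hσ.inv.mul hx
    rwa [← mul_assoc, inv_mul_cancel, one_mul] at this⟩

lemma rowSym_mul_of {σ : Perm (Fin n)} (hσ : T.IsHorizontal σ) :
    T.rowSym * MonoidAlgebra.of ℂ (Perm (Fin n)) σ = T.rowSym := by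
  refine sum_of_mul _ _ (fun x => ?_)
  simp only [Finset.mem_filter, Finset.mem_univ, true_and]
  exact ⟨fun hx => hx.mul hσ, fun hx => by
    have := hx.mul hσ.inv
    rwa [mul_assoc, mul_inv_cancel, mul_one] at this⟩

end SYT


section Emb
variable {m n : ℕ}


lemma viaE_lt (h : m ≤ n) (τ : Perm (Fin m)) (x : Fin n) (hx : (x : ℕ) < m) :
    Perm.viaEmbeddingHom (Fin.castLEEmb h) τ x = Fin.castLE h (τ ⟨x, hx⟩) := by
  rw [Perm.viaEmbeddingHom_apply]
  have hx2 : x = Fin.castLEEmb h ⟨x, hx⟩ := by simp [Fin.ext_iff]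
  conv_lhs => rw [hx2]
  rw [Perm.viaEmbedding_apply]
  simp

lemma viaE_ge (h : m ≤ n) (τ : Perm (Fin m)) (x : Fin n) (hx : m ≤ (x : ℕ)) :
    Perm.viaEmbeddingHom (Fin.castLEEmb h) τ x = x := by
  rw [Perm.viaEmbeddingHom_apply]
  apply Perm.viaEmbedding_apply_of_notMem
  simp only [Fin.coe_castLEEmb, Fin.range_castLE, Set.mem_setOf_eq]
  omega

end Emb


lemma iotaLE_of {m n : ℕ} (h : m ≤ n) (τ : Perm (Fin m)) :
    iotaLE m n h (MonoidAlgebra.of ℂ (Perm (Fin m)) τ) =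
      MonoidAlgebra.of ℂ (Perm (Fin n)) (Perm.viaEmbeddingHom (Fin.castLEEmb h) τ) := by
  simp [iotaLE, MonoidAlgebra.of_apply, MonoidAlgebra.mapDomainAlgHom_apply,
    Finsupp.mapDomain_single]

lemma image_viaE_eq {m n : ℕ} (h : m ≤ n) (S : Finset (Perm (Fin m))) (C : Finset (Perm (Fin n)))
    (hsub : ∀ τ ∈ S, Perm.viaEmbeddingHom (Fin.castLEEmb h) τ ∈ C) (hcard : C.card ≤ S.card) :
    S.image (Perm.viaEmbeddingHom (Fin.castLEEmb h)) = C := by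
  refine Finset.eq_of_subset_of_card_le (fun x hx => ?_) ?_
  · obtain ⟨τ, hτ, rfl⟩ := Finset.mem_image.mp hx
    exact hsub τ hτ
  · rwa [Finset.card_image_of_injective _ (Perm.viaEmbeddingHom_injective _)]

lemma iotaLE_sum {m n : ℕ} (h : m ≤ n) (S : Finset (Perm (Fin m))) (C : Finset (Perm (Fin n)))
    (himg : S.image (Perm.viaEmbeddingHom (Fin.castLEEmb h)) = C) :
    iotaLE m n h (∑ τ ∈ S, MonoidAlgebra.of ℂ (Perm (Fin m)) τ) =
      ∑ σ ∈ C, MonoidAlgebra.of ℂ (Perm (Fin n)) σ := by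
  rw [map_sum]
  simp_rw [iotaLE_of]
  rw [← himg, Finset.sum_image
    (fun x _ y _ hxy => Perm.viaEmbeddingHom_injective (Fin.castLEEmb h) hxy)]

-- generic one-row computations
lemma rowSym_of_rowZero {n : ℕ} (T : SYT n) (h : ∀ x, T.rowOf x = 0) :
    T.rowSym = ∑ σ ∈ univ, MonoidAlgebra.of ℂ (Perm (Fin n)) σ := by
  have hf : Finset.univ.filter (fun σ => T.IsHorizontal σ) = univ :=
    Finset.filter_true_of_mem (fun σ _ => fun x => by rw [h, h])
  rw [SYT.rowSym, hf]

lemma colAntisym_of_colId {n : ℕ} (T : SYT n) (h : ∀ x, T.colOf x = (x : ℕ)) :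
    T.colAntisym = 1 := by
  rw [SYT.colAntisym]
  have hf : Finset.univ.filter (fun σ => T.IsVertical σ) = {1} := by
    ext σ
    simp only [Finset.mem_filter, Finset.mem_univ, true_and, Finset.mem_singleton]
    constructor
    · intro hv
      ext x
      have := hv x
      rw [h, h] at this
      simpa [Fin.ext_iff] using this
    · rintro rfl
      intro x
      simp
  rw [hf, Finset.sum_singleton]
  simp [MonoidAlgebra.one_def, MonoidAlgebra.of_apply]

lemma of_mul_full {n : ℕ} (g : Perm (Fin n)) :
    MonoidAlgebra.of ℂ (Perm (Fin n)) g * (∑ σ ∈ univ, MonoidAlgebra.of ℂ (Perm (Fin n)) σ) =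
      ∑ σ ∈ univ, MonoidAlgebra.of ℂ (Perm (Fin n)) σ := by
  refine of_mul_sum _ _ (fun x => by simp)

lemma full_mul_of {n : ℕ} (g : Perm (Fin n)) :
    (∑ σ ∈ univ, MonoidAlgebra.of ℂ (Perm (Fin n)) σ) * MonoidAlgebra.of ℂ (Perm (Fin n)) g =
      ∑ σ ∈ univ, MonoidAlgebra.of ℂ (Perm (Fin n)) σ := by
  refine sum_of_mul _ _ (fun x => by simp)

-- ### S₅-specific development
namespace ThetaAux

abbrev G5 := Equiv.Perm (Fin 5)
noncomputable abbrev of5 : G5 →* MonoidAlgebra ℂ G5 := MonoidAlgebra.of ℂ G5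

def pt : G5 := Equiv.swap 0 3
def pr : G5 := Equiv.swap 1 4
def pt1 : G5 := Equiv.swap 1 3
def pt2 : G5 := Equiv.swap 2 3

def c3 : Finset G5 := Finset.univ.filter (fun σ => σ 3 = 3 ∧ σ 4 = 4)
def c4 : Finset G5 := Finset.univ.filter (fun σ => σ 4 = 4)

noncomputable def pp : MonoidAlgebra ℂ G5 := ∑ σ ∈ c3, of5 σ
noncomputable def qq : MonoidAlgebra ℂ G5 := ∑ σ ∈ c4, of5 σ

lemma q_mul_of {g : G5} (hg : g 4 = 4) : qq * of5 g = qq := by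
  refine sum_of_mul _ _ (fun x => ?_)
  simp only [c4, Finset.mem_filter, Finset.mem_univ, true_and, Perm.mul_apply, hg]

lemma of_mul_q {g : G5} (hg : g 4 = 4) : of5 g * qq = qq := by
  refine of_mul_sum _ _ (fun x => ?_)
  simp only [c4, Finset.mem_filter, Finset.mem_univ, true_and, Perm.mul_apply]
  constructor
  · intro hx; rw [hx, hg]
  · intro hx
    have : g (x 4) = g 4 := by rw [hg, hx]
    exact g.injective this

lemma p_mul_of {g : G5} (hg : g 3 = 3 ∧ g 4 = 4) : pp * of5 g = pp := by
  refine sum_of_mul _ _ (fun x => ?_)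
  simp only [c3, Finset.mem_filter, Finset.mem_univ, true_and, Perm.mul_apply, hg.1, hg.2]

lemma of_mul_p {g : G5} (hg : g 3 = 3 ∧ g 4 = 4) : of5 g * pp = pp := by
  refine of_mul_sum _ _ (fun x => ?_)
  simp only [c3, Finset.mem_filter, Finset.mem_univ, true_and, Perm.mul_apply]
  constructor
  · rintro ⟨h3, h4⟩; rw [h3, h4]; exact hg
  · rintro ⟨h3, h4⟩
    exact ⟨g.injective (h3.trans hg.1.symm), g.injective (h4.trans hg.2.symm)⟩

lemma pp_mul_pp : pp * pp = (6 : ℂ) • pp := by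
  have : pp * pp = ∑ σ ∈ c3, of5 σ * pp := by rw [pp, Finset.sum_mul]
  rw [this, Finset.sum_congr rfl (fun g hg => of_mul_p (by
    simpa [c3, Finset.mem_filter] using hg)), Finset.sum_const,
    show c3.card = 6 by decide]
  rw [← Nat.cast_smul_eq_nsmul ℂ]; norm_num

-- the key vanishing lemma: q * σ * a₁ = 0 for every σ
lemma q_vanish (σ : G5) :
    qq * of5 σ * (1 - of5 pt - of5 pr + of5 (pt * pr)) = 0 := by
  have hcomm : pt * pr = pr * pt := by decide
  have expand : qq * of5 σ * (1 - of5 pt - of5 pr + of5 (pt * pr)) =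
      qq * of5 σ - qq * of5 (σ * pt) - qq * of5 (σ * pr) + qq * of5 (σ * (pt * pr)) := by
    simp only [mul_sub, mul_add, mul_one, ← map_mul, mul_assoc]
  rw [expand]
  by_cases h03 : σ⁻¹ 4 = 0 ∨ σ⁻¹ 4 = 3
  · -- conjugate of pr fixes 4
    have hne : σ⁻¹ 4 ≠ 1 ∧ σ⁻¹ 4 ≠ 4 := by
      rcases h03 with h | h <;> rw [h] <;> exact ⟨by decide, by decide⟩
    have hk4 : (σ * pr * σ⁻¹) 4 = 4 := by
      simp only [Perm.mul_apply]
      rw [show pr (σ⁻¹ 4) = σ⁻¹ 4 from Equiv.swap_apply_of_ne_of_ne hne.1 hne.2,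
        show σ (σ⁻¹ 4) = 4 from Equiv.apply_symm_apply σ 4]
    have e1 : σ * pr = (σ * pr * σ⁻¹) * σ := by group
    have e2 : σ * (pt * pr) = (σ * pr * σ⁻¹) * (σ * pt) := by rw [hcomm]; group
    have a1 : qq * of5 (σ * pr) = qq * of5 σ := by
      rw [e1, map_mul, ← mul_assoc, q_mul_of hk4]
    have a2 : qq * of5 (σ * (pt * pr)) = qq * of5 (σ * pt) := by
      rw [e2, map_mul, ← mul_assoc, q_mul_of hk4]
    rw [a1, a2]; abel
  · -- conjugate of pt fixes 4
    push_neg at h03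
    have hk4 : (σ * pt * σ⁻¹) 4 = 4 := by
      simp only [Perm.mul_apply]
      rw [show pt (σ⁻¹ 4) = σ⁻¹ 4 from Equiv.swap_apply_of_ne_of_ne h03.1 h03.2,
        show σ (σ⁻¹ 4) = 4 from Equiv.apply_symm_apply σ 4]
    have e1 : σ * pt = (σ * pt * σ⁻¹) * σ := by group
    have e2 : σ * (pt * pr) = (σ * pt * σ⁻¹) * (σ * pr) := by group
    have a1 : qq * of5 (σ * pt) = qq * of5 σ := by
      rw [e1, map_mul, ← mul_assoc, q_mul_of hk4]
    have a2 : qq * of5 (σ * (pt * pr)) = qq * of5 (σ * pr) := by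
      rw [e2, map_mul, ← mul_assoc, q_mul_of hk4]
    rw [a1, a2]; abel

lemma a_mul_q : (1 - of5 pt - of5 pr + of5 (pt * pr)) * qq = 0 := by
  have h1 : of5 pt * qq = qq := of_mul_q (by decide)
  have h2 : of5 (pt * pr) * qq = of5 pr * qq := by
    rw [show pt * pr = pr * pt by decide, map_mul, mul_assoc, h1]
  rw [add_mul, sub_mul, sub_mul, one_mul, h1, h2]
  abel

end ThetaAux

namespace ThetaAux

lemma hrow5 : ∀ x : Fin 5, T₁.rowOf x = if (x : ℕ) < 3 then 0 else 1 := by decide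
lemma hcol5 : ∀ x : Fin 5, T₁.colOf x = (x : ℕ) % 3 := by decide
lemma hookT₁ : hookProd T₁.shape = 24 := by
  simp only [hookProd, hookLength, YoungDiagram.rowLen_eq_card, YoungDiagram.colLen_eq_card]
  decide

lemma youngT₁ : youngOp T₁ = (24 : ℂ)⁻¹ • (T₁.rowSym * T₁.colAntisym) := by
  rw [youngOp, hookT₁]; norm_num

lemma c3_horizontal {g : G5} (hg : g 3 = 3 ∧ g 4 = 4) : T₁.IsHorizontal g := by
  intro x
  rw [hrow5, hrow5]
  exact if_congr (by
    revert x
    revert hg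
    revert g
    decide) rfl rfl

lemma colAntisymT₁ : T₁.colAntisym =
    1 - of5 pt - of5 pr + of5 (pt * pr) := by
  rw [SYT.colAntisym]
  have hf : Finset.univ.filter (fun σ => T₁.IsVertical σ) = {1, pt, pr, pt * pr} := by
    ext σ
    simp only [Finset.mem_filter, Finset.mem_univ, true_and, Finset.mem_insert,
      Finset.mem_singleton, SYT.IsVertical]
    simp only [hcol5]
    revert σ
    decide
  rw [hf]
  rw [Finset.sum_insert (by decide), Finset.sum_insert (by decide),
    Finset.sum_insert (by decide), Finset.sum_singleton]
  rw [show Perm.sign (1 : G5) = 1 by decide, show Perm.sign pt = -1 by decide,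
    show Perm.sign pr = -1 by decide, show Perm.sign (pt * pr) = 1 by decide]
  push_cast
  simp only [one_smul, neg_smul, map_one]
  abel

lemma q_mul_Y : qq * youngOp T₁ = 0 := by
  rw [youngT₁, mul_smul_comm, SYT.rowSym, colAntisymT₁]
  rw [← mul_assoc, Finset.mul_sum, Finset.sum_mul]
  rw [Finset.sum_eq_zero (fun σ _ => q_vanish σ)]
  simp

lemma Y_mul_q : youngOp T₁ * qq = 0 := by
  rw [youngT₁, smul_mul_assoc, mul_assoc, colAntisymT₁, a_mul_q]
  simp

lemma of_mul_Y {g : G5} (hg : g 3 = 3 ∧ g 4 = 4) : of5 g * youngOp T₁ = youngOp T₁ := by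
  rw [youngT₁, mul_smul_comm, ← mul_assoc, SYT.of_mul_rowSym (c3_horizontal hg)]

lemma p_mul_Y : pp * youngOp T₁ = (6 : ℂ) • youngOp T₁ := by
  have : pp * youngOp T₁ = ∑ σ ∈ c3, of5 σ * youngOp T₁ := by rw [pp, Finset.sum_mul]
  rw [this, Finset.sum_congr rfl (fun g hg => of_mul_Y (by
    simpa [c3, Finset.mem_filter] using hg)), Finset.sum_const,
    show c3.card = 6 by decide]
  rw [← Nat.cast_smul_eq_nsmul ℂ]; norm_num

lemma q_decomp : qq = pp + pp * of5 pt + pp * of5 pt1 + pp * of5 pt2 := by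
  have himg : ∀ g : G5, pp * of5 g = ∑ σ ∈ c3.image (· * g), of5 σ := by
    intro g
    rw [pp, Finset.sum_mul, Finset.sum_image (fun x _ y _ h => by
      have := congrArg (· * g⁻¹) h
      simpa [mul_assoc] using this)]
    simp_rw [← map_mul]
  have hun : c4 = (c3 ∪ c3.image (· * pt)) ∪ (c3.image (· * pt1) ∪ c3.image (· * pt2)) := by
    decide
  have d1 : Disjoint c3 (c3.image (· * pt)) := Finset.disjoint_left.mpr (by decide)
  have d2 : Disjoint (c3.image (· * pt1)) (c3.image (· * pt2)) :=
    Finset.disjoint_left.mpr (by decide)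
  have d3 : Disjoint (c3 ∪ c3.image (· * pt)) (c3.image (· * pt1) ∪ c3.image (· * pt2)) :=
    Finset.disjoint_left.mpr (by decide)
  rw [qq, hun, Finset.sum_union d3, Finset.sum_union d1, Finset.sum_union d2]
  rw [← pp, ← himg, ← himg, ← himg]
  abel

end ThetaAux

namespace ThetaAux

def h1 : G5 := Equiv.swap 0 1
def h2 : G5 := Equiv.swap 0 2

lemma sandwich_Y (h : G5) (hh : h 3 = 3 ∧ h 4 = 4) (hhi : h⁻¹ 3 = 3 ∧ h⁻¹ 4 = 4) :
    pp * of5 (h * pt * h⁻¹) * youngOp T₁ = pp * of5 pt * youngOp T₁ := by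
  rw [map_mul, map_mul, ← mul_assoc, ← mul_assoc, p_mul_of hh,
    mul_assoc (pp * of5 pt), mul_assoc, of_mul_Y hhi, ← mul_assoc]

lemma sandwich_p (h : G5) (hh : h 3 = 3 ∧ h 4 = 4) (hhi : h⁻¹ 3 = 3 ∧ h⁻¹ 4 = 4) :
    pp * of5 (h * pt * h⁻¹) * pp = pp * of5 pt * pp := by
  rw [map_mul, map_mul, ← mul_assoc, ← mul_assoc, p_mul_of hh,
    mul_assoc (pp * of5 pt), of_mul_p hhi]

lemma conj1 : pt1 = h1 * pt * h1⁻¹ := by decide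
lemma conj2 : pt2 = h2 * pt * h2⁻¹ := by decide
lemma h1mem : h1 3 = 3 ∧ h1 4 = 4 := by decide
lemma h1imem : h1⁻¹ 3 = 3 ∧ h1⁻¹ 4 = 4 := by decide
lemma h2mem : h2 3 = 3 ∧ h2 4 = 4 := by decide
lemma h2imem : h2⁻¹ 3 = 3 ∧ h2⁻¹ 4 = 4 := by decide

lemma three_smul_trick {M : Type*} [AddCommGroup M] [Module ℂ M] (X Y : M)
    (h0 : (6 : ℂ) • Y + X + X + X = 0) : X = (-2 : ℂ) • Y := by
  have h6 : (3 : ℂ) • X = (-6 : ℂ) • Y := by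
    have h3 : (3 : ℂ) • X = X + X + X := by
      rw [show (3 : ℂ) = 1 + 1 + 1 by norm_num, add_smul, add_smul, one_smul]
    rw [h3, show (-6 : ℂ) • Y = 0 - (6 : ℂ) • Y by rw [zero_sub, neg_smul], ← h0]
    abel
  calc X = (3 : ℂ)⁻¹ • ((3 : ℂ) • X) := by rw [smul_smul]; norm_num
    _ = (3 : ℂ)⁻¹ • ((-6 : ℂ) • Y) := by rw [h6]
    _ = (-2 : ℂ) • Y := by rw [smul_smul]; norm_num

lemma ptY : pp * of5 pt * youngOp T₁ = (-2 : ℂ) • youngOp T₁ := by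
  have h0 := q_mul_Y
  rw [q_decomp, add_mul, add_mul, add_mul, p_mul_Y, conj1, conj2,
    sandwich_Y h1 h1mem h1imem, sandwich_Y h2 h2mem h2imem] at h0
  exact three_smul_trick _ _ h0

lemma Yptp : youngOp T₁ * pp * of5 pt * pp = (-2 : ℂ) • (youngOp T₁ * pp) := by
  have h0 : youngOp T₁ * qq * pp = 0 := by rw [Y_mul_q, zero_mul]
  rw [q_decomp, mul_add, mul_add, mul_add, add_mul, add_mul, add_mul] at h0
  rw [show youngOp T₁ * pp * pp = (6:ℂ) • (youngOp T₁ * pp) from by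
    rw [mul_assoc, pp_mul_pp, mul_smul_comm]] at h0
  rw [show youngOp T₁ * (pp * of5 pt) * pp = youngOp T₁ * (pp * of5 pt * pp) from by
    simp only [mul_assoc],
    show youngOp T₁ * (pp * of5 pt1) * pp = youngOp T₁ * (pp * of5 pt1 * pp) from by
    simp only [mul_assoc],
    show youngOp T₁ * (pp * of5 pt2) * pp = youngOp T₁ * (pp * of5 pt2 * pp) from by
    simp only [mul_assoc]] at h0
  rw [conj1, conj2, sandwich_p h1 h1mem h1imem, sandwich_p h2 h2mem h2imem] at h0
  rw [show youngOp T₁ * (pp * of5 pt * pp) = youngOp T₁ * pp * of5 pt * pp from by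
    simp only [mul_assoc]] at h0
  exact three_smul_trick _ _ h0

end ThetaAux

namespace ThetaAux

-- low-level tableau computations
lemma hrow2 : ∀ x : Fin 2, T₁.restrict.restrict.restrict.rowOf x = 0 := by decide
lemma hcol2 : ∀ x : Fin 2, T₁.restrict.restrict.restrict.colOf x = (x : ℕ) := by decide
lemma hook2 : hookProd T₁.restrict.restrict.restrict.shape = 2 := by
  simp only [hookProd, hookLength, YoungDiagram.rowLen_eq_card, YoungDiagram.colLen_eq_card]
  decide
lemma hrow3 : ∀ x : Fin 3, T₁.restrict.restrict.rowOf x = 0 := by decide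
lemma hcol3 : ∀ x : Fin 3, T₁.restrict.restrict.colOf x = (x : ℕ) := by decide
lemma hook3 : hookProd T₁.restrict.restrict.shape = 6 := by
  simp only [hookProd, hookLength, YoungDiagram.rowLen_eq_card, YoungDiagram.colLen_eq_card]
  decide
lemma hrowR3 : ∀ x : Fin 3, rowTab3.rowOf x = 0 := by decide
lemma hcolR3 : ∀ x : Fin 3, rowTab3.colOf x = (x : ℕ) := by decide
lemma hookR3 : hookProd rowTab3.shape = 6 := by
  simp only [hookProd, hookLength, YoungDiagram.rowLen_eq_card, YoungDiagram.colLen_eq_card]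
  decide
lemma hrow4 : ∀ x : Fin 4, T₁.restrict.rowOf x = if (x : ℕ) < 3 then 0 else 1 := by decide
lemma hcol4 : ∀ x : Fin 4, T₁.restrict.colOf x = (x : ℕ) % 3 := by decide
lemma hook4 : hookProd T₁.restrict.shape = 8 := by
  simp only [hookProd, hookLength, YoungDiagram.rowLen_eq_card, YoungDiagram.colLen_eq_card]
  decide

noncomputable def F2 : MonoidAlgebra ℂ (Perm (Fin 2)) :=
  ∑ σ ∈ Finset.univ, MonoidAlgebra.of ℂ (Perm (Fin 2)) σ
noncomputable def F3 : MonoidAlgebra ℂ (Perm (Fin 3)) :=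
  ∑ σ ∈ Finset.univ, MonoidAlgebra.of ℂ (Perm (Fin 3)) σ

lemma youngOp₂ : youngOp T₁.restrict.restrict.restrict = (2 : ℂ)⁻¹ • F2 := by
  rw [youngOp, hook2, rowSym_of_rowZero _ hrow2, colAntisym_of_colId _ hcol2, mul_one, F2]
  norm_num

lemma youngOp₃ : youngOp T₁.restrict.restrict = (6 : ℂ)⁻¹ • F3 := by
  rw [youngOp, hook3, rowSym_of_rowZero _ hrow3, colAntisym_of_colId _ hcol3, mul_one, F3]
  norm_num

lemma youngOpR3 : youngOp rowTab3 = (6 : ℂ)⁻¹ • F3 := by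
  rw [youngOp, hookR3, rowSym_of_rowZero _ hrowR3, colAntisym_of_colId _ hcolR3, mul_one, F3]
  norm_num

def c2' : Finset (Perm (Fin 3)) := Finset.univ.filter (fun σ => σ 2 = 2)
noncomputable def W : MonoidAlgebra ℂ (Perm (Fin 3)) := ∑ σ ∈ c2', MonoidAlgebra.of ℂ (Perm (Fin 3)) σ

lemma img23 : (Finset.univ : Finset (Perm (Fin 2))).image
    (Perm.viaEmbeddingHom (Fin.castLEEmb (show 2 ≤ 3 by norm_num))) = c2' := by
  refine image_viaE_eq _ _ _ (fun τ _ => ?_) (by decide)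
  simp only [c2', Finset.mem_filter, Finset.mem_univ, true_and]
  exact viaE_ge _ τ 2 (by decide)

lemma iota23 : iota 2 (youngOp T₁.restrict.restrict.restrict) = (2 : ℂ)⁻¹ • W := by
  rw [youngOp₂, iota, map_smul, F2, iotaLE_sum _ _ _ img23, W]

lemma theta₃ : theta 3 T₁.restrict.restrict = (6 : ℂ)⁻¹ • F3 := by
  have h0 : theta 3 T₁.restrict.restrict =
      iota 2 (youngOp T₁.restrict.restrict.restrict) * youngOp T₁.restrict.restrict *
        iota 2 (youngOp T₁.restrict.restrict.restrict) := rfl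
  rw [h0, iota23, youngOp₃]
  have hWF : W * F3 = (2 : ℂ) • F3 := by
    simp only [W, F3, Finset.sum_mul]
    rw [Finset.sum_congr rfl (fun σ _ => of_mul_full σ), Finset.sum_const,
      show c2'.card = 2 by decide, ← Nat.cast_smul_eq_nsmul ℂ]
    norm_num
  have hFW : F3 * W = (2 : ℂ) • F3 := by
    simp only [W, F3, Finset.mul_sum]
    rw [Finset.sum_congr rfl (fun σ _ => full_mul_of σ), Finset.sum_const,
      show c2'.card = 2 by decide, ← Nat.cast_smul_eq_nsmul ℂ]
    norm_num
  simp only [smul_mul_assoc, mul_smul_comm]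
  rw [hWF]
  simp only [smul_mul_assoc]
  rw [hFW]
  simp only [smul_smul]
  norm_num

def c3' : Finset (Perm (Fin 4)) := Finset.univ.filter (fun σ => σ 3 = 3)
noncomputable def p4 : MonoidAlgebra ℂ (Perm (Fin 4)) := ∑ σ ∈ c3', MonoidAlgebra.of ℂ (Perm (Fin 4)) σ

lemma img34 : (Finset.univ : Finset (Perm (Fin 3))).image
    (Perm.viaEmbeddingHom (Fin.castLEEmb (show 3 ≤ 4 by norm_num))) = c3' := by
  refine image_viaE_eq _ _ _ (fun τ _ => ?_) (by decide)
  simp only [c3', Finset.mem_filter, Finset.mem_univ, true_and]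
  exact viaE_ge _ τ 3 (by decide)

lemma iota34 : iota 3 (theta 3 T₁.restrict.restrict) = (6 : ℂ)⁻¹ • p4 := by
  rw [theta₃, iota, map_smul, F3, iotaLE_sum _ _ _ img34, p4]

lemma dec4horiz : ∀ σ : Perm (Fin 4), σ 3 = 3 → T₁.restrict.IsHorizontal σ := by
  intro σ hσ x
  rw [hrow4, hrow4]
  exact if_congr (by revert x; revert hσ; revert σ; decide) rfl rfl

lemma p4_mul_rowSym : p4 * T₁.restrict.rowSym = (6 : ℂ) • T₁.restrict.rowSym := by
  rw [p4, Finset.sum_mul, Finset.sum_congr rfl (fun σ hσ => SYT.of_mul_rowSym (dec4horiz σ (by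
    simpa [c3', Finset.mem_filter] using hσ))), Finset.sum_const,
    show c3'.card = 6 by decide, ← Nat.cast_smul_eq_nsmul ℂ]
  norm_num

lemma theta₄ : theta 4 T₁.restrict = youngOp T₁.restrict * ((6 : ℂ)⁻¹ • p4) := by
  have h0 : theta 4 T₁.restrict =
      iota 3 (theta 3 T₁.restrict.restrict) * youngOp T₁.restrict *
        iota 3 (theta 3 T₁.restrict.restrict) := rfl
  rw [h0, iota34]
  congr 1
  rw [youngOp, hook4, mul_smul_comm, smul_mul_assoc, ← mul_assoc, p4_mul_rowSym,
    smul_mul_assoc, smul_smul, smul_smul]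
  norm_num

end ThetaAux

namespace ThetaAux

def t4 : Perm (Fin 4) := Equiv.swap 0 3

lemma hs5 : T₁.restrict.rowSym = ∑ σ ∈ c3', MonoidAlgebra.of ℂ (Perm (Fin 4)) σ := by
  rw [SYT.rowSym]
  congr 1
  ext σ
  simp only [Finset.mem_filter, Finset.mem_univ, true_and, c3']
  constructor
  · intro hσ
    have h := hσ 3
    rw [hrow4, hrow4] at h
    by_cases hlt : ((σ 3 : Fin 4) : ℕ) < 3
    · rw [if_pos hlt, if_neg (by decide : ¬(((3 : Fin 4) : ℕ) < 3))] at h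
      exact absurd h (by decide)
    · have hb := (σ 3).isLt
      have hv : ((σ 3 : Fin 4) : ℕ) = 3 := by omega
      exact Fin.ext (by rw [hv]; rfl)
  · exact fun hσ => dec4horiz σ hσ

lemma ha5 : T₁.restrict.colAntisym = 1 - MonoidAlgebra.of ℂ (Perm (Fin 4)) t4 := by
  rw [SYT.colAntisym]
  have hf : Finset.univ.filter (fun σ => T₁.restrict.IsVertical σ) = {1, t4} := by
    ext σ
    simp only [Finset.mem_filter, Finset.mem_univ, true_and, Finset.mem_insert,
      Finset.mem_singleton, SYT.IsVertical]
    simp only [hcol4]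
    revert σ
    decide
  rw [hf, Finset.sum_insert (by decide), Finset.sum_singleton,
    show Perm.sign (1 : Perm (Fin 4)) = 1 by decide, show Perm.sign t4 = -1 by decide]
  push_cast
  simp only [one_smul, neg_smul, map_one]
  abel

lemma img45 : c3'.image
    (Perm.viaEmbeddingHom (Fin.castLEEmb (show 4 ≤ 5 by norm_num))) = c3 := by
  refine image_viaE_eq _ _ _ (fun τ hτ => ?_) (by decide)
  simp only [c3', Finset.mem_filter, Finset.mem_univ, true_and] at hτ
  simp only [c3, Finset.mem_filter, Finset.mem_univ, true_and]
  constructor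
  · rw [viaE_lt _ τ 3 (by decide), show (⟨((3 : Fin 5) : ℕ), by decide⟩ : Fin 4) = 3 from rfl, hτ]
    decide
  · exact viaE_ge _ τ 4 (by decide)

lemma img35 : (Finset.univ : Finset (Perm (Fin 3))).image
    (Perm.viaEmbeddingHom (Fin.castLEEmb (show 3 ≤ 5 by norm_num))) = c3 := by
  refine image_viaE_eq _ _ _ (fun τ _ => ?_) (by decide)
  simp only [c3, Finset.mem_filter, Finset.mem_univ, true_and]
  exact ⟨viaE_ge _ τ 3 (by decide), viaE_ge _ τ 4 (by decide)⟩

lemma E45t4 : Perm.viaEmbeddingHom (Fin.castLEEmb (show 4 ≤ 5 by norm_num)) t4 = pt := by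
  have hpos : ∀ (x : Fin 5) (hx : (x : ℕ) < 4),
      Fin.castLE (show 4 ≤ 5 by norm_num) (t4 ⟨(x : ℕ), hx⟩) = Equiv.swap (0 : Fin 5) 3 x := by
    decide
  have hneg : ∀ x : Fin 5, ¬((x : ℕ) < 4) → Equiv.swap (0 : Fin 5) 3 x = x := by decide
  refine Equiv.ext fun x => ?_
  show _ = Equiv.swap (0 : Fin 5) 3 x
  by_cases hx : (x : ℕ) < 4
  · rw [viaE_lt _ _ x hx]
    exact hpos x hx
  · rw [viaE_ge _ _ x (by omega)]
    exact (hneg x hx).symm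

noncomputable def AA : MonoidAlgebra ℂ G5 := (8 : ℂ)⁻¹ • (pp * (1 - of5 pt))
noncomputable def BB : MonoidAlgebra ℂ G5 := (6 : ℂ)⁻¹ • pp

lemma iotaθ₄ : iota 4 (theta 4 T₁.restrict) = AA * BB := by
  rw [theta₄, map_mul]
  congr 1
  · rw [youngOp, hook4, map_smul, map_mul, hs5, iota, iotaLE_sum _ _ _ img45, ha5, map_sub,
      map_one, iotaLE_of, E45t4, AA, ← pp]
    norm_num
  · rw [map_smul, iota, p4, iotaLE_sum _ _ _ img45, BB, pp]

lemma hC : iotaLE 3 5 (show 3 ≤ 5 by norm_num) (youngOp rowTab3) = BB := by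
  rw [youngOpR3, map_smul, F3, iotaLE_sum _ _ _ img35, BB, pp]

lemma hBY : BB * youngOp T₁ = youngOp T₁ := by
  rw [BB, smul_mul_assoc, p_mul_Y, smul_smul]
  norm_num

lemma hAY : AA * youngOp T₁ = youngOp T₁ := by
  rw [AA, smul_mul_assoc, mul_sub, mul_one, sub_mul, p_mul_Y, ptY,
    show (6 : ℂ) • youngOp T₁ - (-2 : ℂ) • youngOp T₁ = (8 : ℂ) • youngOp T₁ from by
      rw [← sub_smul]; norm_num,
    smul_smul]
  norm_num

lemma hYB : youngOp T₁ * BB = (6 : ℂ)⁻¹ • (youngOp T₁ * pp) := by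
  rw [BB, mul_smul_comm]

lemma hYAB : youngOp T₁ * (AA * BB) = youngOp T₁ * BB := by
  have h1 : AA * BB = (48 : ℂ)⁻¹ • (pp * (1 - of5 pt) * pp) := by
    rw [AA, BB, smul_mul_assoc, mul_smul_comm, smul_smul]
    norm_num
  have h2 : youngOp T₁ * (pp * of5 pt * pp) = (-2 : ℂ) • (youngOp T₁ * pp) := by
    rw [← mul_assoc, ← mul_assoc, Yptp]
  have h3 : youngOp T₁ * (pp * pp) = (6 : ℂ) • (youngOp T₁ * pp) := by
    rw [pp_mul_pp, mul_smul_comm]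
  rw [h1, mul_smul_comm, mul_sub, mul_one, sub_mul, mul_sub, h2, h3,
    show (6 : ℂ) • (youngOp T₁ * pp) - (-2 : ℂ) • (youngOp T₁ * pp) =
      (8 : ℂ) • (youngOp T₁ * pp) from by rw [← sub_smul]; norm_num,
    BB, mul_smul_comm, smul_smul]
  norm_num

end ThetaAux


/-- **Simplified construction of `Θ_{T₁}`.**  For the standard tableau `T₁` of shape
`(3,2)` with rows `{1,2,3}` and `{4,5}`, and the single-row tableau `S` with entries
`1,2,3` (so that `Y_S` is the full symmetrizer on `{1,2,3}`), the Hermitian Young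
operator satisfies `Θ_{T₁} = ι₃(Y_S) · Y_{T₁} · ι₃(Y_S)` in `ℂ[S₅]`, where
`ι₃ : ℂ[S₃] → ℂ[S₅]` is the embedding induced by the inclusion `S₃ ↪ S₅` fixing `4`
and `5`. -/
theorem theta_T₁_eq_symmetrizer_sandwich :
    theta 5 T₁ =
      iotaLE 3 5 (by norm_num) (youngOp rowTab3) * youngOp T₁ *
        iotaLE 3 5 (by norm_num) (youngOp rowTab3) := by
  have hmain : theta 5 T₁ =
      iota 4 (theta 4 T₁.restrict) * youngOp T₁ * iota 4 (theta 4 T₁.restrict) := rfl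
  rw [hmain, ThetaAux.iotaθ₄, ThetaAux.hC]
  calc ThetaAux.AA * ThetaAux.BB * youngOp T₁ * (ThetaAux.AA * ThetaAux.BB)
      = ThetaAux.AA * (ThetaAux.BB * youngOp T₁) * (ThetaAux.AA * ThetaAux.BB) := by
        simp only [mul_assoc]
    _ = youngOp T₁ * (ThetaAux.AA * ThetaAux.BB) := by rw [ThetaAux.hBY, ThetaAux.hAY]
    _ = youngOp T₁ * ThetaAux.BB := ThetaAux.hYAB
    _ = ThetaAux.BB * youngOp T₁ * ThetaAux.BB := by rw [ThetaAux.hBY]
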